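/- Under the hypotheses of the compression-based ML denoiser theorem, with probability at least 1 − 2^{−ηR+2}, √(D(P)) ≤ ‖x − x̂‖ ≤ √(D(P)) + 2σ√((2 ln 2)R)(1 + 2√η), where D(P) = ‖x̃ − x‖² is the distortion of the codebook on the clean signal. -/

import Mathlib

open MeasureTheory ProbabilityTheory

open scoped NNReal ENNReal


lemma aux_gauss_pdf_mul (v : ℝ≥0) (hv : v ≠ 0) (t x : ℝ) :
    gaussianPDFReal 0 v x * Real.exp (t * x)
      = Real.exp ((v : ℝ) * t ^ 2 / 2) * gaussianPDFReal (t * v) v x := by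
  have hv' : (0:ℝ) < v := lt_of_le_of_ne (v.coe_nonneg) (by exact_mod_cast (Ne.symm hv))
  simp only [gaussianPDFReal]
  have he : -(x - 0) ^ 2 / (2 * (v:ℝ)) + t * x
      = (v:ℝ) * t ^ 2 / 2 + -(x - t * (v:ℝ)) ^ 2 / (2 * (v:ℝ)) := by
    field_simp
    ring
  rw [mul_assoc, ← Real.exp_add, he, Real.exp_add]
  ring

lemma aux_gauss_exp_integrable (v : ℝ≥0) (hv : v ≠ 0) (t : ℝ) :
    Integrable (fun x => Real.exp (t * x)) (gaussianReal 0 v) := by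
  rw [gaussianReal_of_var_ne_zero _ hv, gaussianPDF_def]
  have hmeas : Measurable fun x => (gaussianPDFReal 0 v x).toNNReal :=
    (measurable_gaussianPDFReal 0 v).real_toNNReal
  have : (fun x => ENNReal.ofReal (gaussianPDFReal 0 v x))
      = fun x => ((gaussianPDFReal 0 v x).toNNReal : ℝ≥0∞) := rfl
  rw [this, integrable_withDensity_iff_integrable_smul hmeas]
  have : (fun x => ((gaussianPDFReal 0 v x).toNNReal : ℝ≥0) • Real.exp (t * x))
      =ᵐ[volume] fun x => Real.exp ((v : ℝ) * t ^ 2 / 2) * gaussianPDFReal (t * v) v x := by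
    refine Filter.Eventually.of_forall fun x => ?_
    simp only [NNReal.smul_def, smul_eq_mul, Real.coe_toNNReal _ (gaussianPDFReal_nonneg 0 v x)]
    exact aux_gauss_pdf_mul v hv t x
  exact (Integrable.congr ((integrable_gaussianPDFReal (t * v) v).const_mul _) this.symm)

lemma aux_gauss_exp_integral (v : ℝ≥0) (hv : v ≠ 0) (t : ℝ) :
    ∫ x, Real.exp (t * x) ∂(gaussianReal 0 v) = Real.exp ((v : ℝ) * t ^ 2 / 2) := by
  rw [gaussianReal_of_var_ne_zero _ hv, gaussianPDF_def]
  have hmeas : Measurable fun x => (gaussianPDFReal 0 v x).toNNReal :=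
    (measurable_gaussianPDFReal 0 v).real_toNNReal
  have h : (fun x => ENNReal.ofReal (gaussianPDFReal 0 v x))
      = fun x => ((gaussianPDFReal 0 v x).toNNReal : ℝ≥0∞) := rfl
  rw [h, integral_withDensity_eq_integral_smul hmeas]
  have : ∀ x, ((gaussianPDFReal 0 v x).toNNReal : ℝ≥0) • Real.exp (t * x)
      = Real.exp ((v : ℝ) * t ^ 2 / 2) * gaussianPDFReal (t * v) v x := by
    intro x
    simp only [NNReal.smul_def, smul_eq_mul, Real.coe_toNNReal _ (gaussianPDFReal_nonneg 0 v x)]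
    exact aux_gauss_pdf_mul v hv t x
  simp_rw [this]
  rw [integral_const_mul, integral_gaussianPDFReal_eq_one _ hv, mul_one]

lemma aux_pi_integral {n : ℕ} (μ : Measure ℝ) [SigmaFinite μ] (f : Fin n → ℝ → ℝ) :
    ∫ z : Fin n → ℝ, ∏ i, f i (z i) ∂(Measure.pi fun _ => μ) = ∏ i, ∫ x, f i x ∂μ := by
  letI : MeasureSpace ℝ := ⟨μ⟩
  haveI : SigmaFinite (volume : Measure ℝ) := ‹SigmaFinite μ›
  exact MeasureTheory.integral_fintype_prod_eq_prod f

lemma aux_pi_integrable {n : ℕ} (μ : Measure ℝ) [SigmaFinite μ] (f : Fin n → ℝ → ℝ)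
    (hf : ∀ i, Integrable (f i) μ) :
    Integrable (fun z : Fin n → ℝ => ∏ i, f i (z i)) (Measure.pi fun _ => μ) := by
  letI : MeasureSpace ℝ := ⟨μ⟩
  haveI : SigmaFinite (volume : Measure ℝ) := ‹SigmaFinite μ›
  exact MeasureTheory.Integrable.fintype_prod hf

lemma aux_exp_eq {n : ℕ} (w : Fin n → ℝ) (t : ℝ) (z : Fin n → ℝ) :
    Real.exp (t * ∑ i, w i * z i) = ∏ i, Real.exp (t * w i * z i) := by
  rw [← Real.exp_sum, Finset.mul_sum]
  congr 1
  exact Finset.sum_congr rfl fun i _ => by ring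

lemma aux_pi_exp_integrable (v : ℝ≥0) (hv : v ≠ 0) {n : ℕ} (w : Fin n → ℝ) (t : ℝ) :
    Integrable (fun z : Fin n → ℝ => Real.exp (t * ∑ i, w i * z i))
      (Measure.pi fun _ => gaussianReal 0 v) := by
  simp_rw [aux_exp_eq w t]
  exact aux_pi_integrable _ _ fun i => aux_gauss_exp_integrable v hv (t * w i)

lemma aux_pi_exp_integral (v : ℝ≥0) (hv : v ≠ 0) {n : ℕ} (w : Fin n → ℝ) (t : ℝ) :
    ∫ z : Fin n → ℝ, Real.exp (t * ∑ i, w i * z i) ∂(Measure.pi fun _ => gaussianReal 0 v)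
      = Real.exp ((v : ℝ) * t ^ 2 * (∑ i, w i ^ 2) / 2) := by
  simp_rw [aux_exp_eq w t]
  rw [aux_pi_integral (gaussianReal 0 v) (fun i x => Real.exp (t * w i * x))]
  have h : ∀ i, ∫ x, Real.exp (t * w i * x) ∂(gaussianReal 0 v)
      = Real.exp ((v : ℝ) * (t * w i) ^ 2 / 2) := fun i => aux_gauss_exp_integral v hv _
  simp_rw [h, ← Real.exp_sum]
  congr 1
  rw [Finset.mul_sum, Finset.sum_div]
  exact Finset.sum_congr rfl fun i _ => by ring

lemma aux_chernoff (v : ℝ≥0) (hv : v ≠ 0) {n : ℕ} (w : Fin n → ℝ) (a t : ℝ) (ht : 0 ≤ t) :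
    (Measure.pi fun _ : Fin n => gaussianReal 0 v) {z | a ≤ ∑ i, w i * z i}
      ≤ ENNReal.ofReal (Real.exp (-t * a + (v : ℝ) * t ^ 2 * (∑ i, w i ^ 2) / 2)) := by
  set μ := Measure.pi fun _ : Fin n => gaussianReal 0 v with hμ
  have h1 : (μ {z | a ≤ ∑ i, w i * z i}).toReal
      ≤ Real.exp (-t * a) * mgf (fun z => ∑ i, w i * z i) μ t :=
    measure_ge_le_exp_mul_mgf a ht (aux_pi_exp_integrable v hv w t)
  have h2 : mgf (fun z : Fin n → ℝ => ∑ i, w i * z i) μ t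
      = Real.exp ((v : ℝ) * t ^ 2 * (∑ i, w i ^ 2) / 2) := aux_pi_exp_integral v hv w t
  rw [h2, ← Real.exp_add] at h1
  have hfin : μ {z | a ≤ ∑ i, w i * z i} ≠ ⊤ := measure_ne_top _ _
  rw [← ENNReal.ofReal_toReal hfin]
  exact ENNReal.ofReal_le_ofReal h1

lemma aux_quad (A B t : ℝ) (hA : 0 ≤ A) (hB : 0 ≤ B) (ht : 0 ≤ t)
    (h : A ^ 2 ≤ B ^ 2 + 2 * t * (A + B)) : A ≤ B + 2 * t := by
  nlinarith [sq_nonneg (A - B - 2 * t), sq_nonneg (A + B), mul_nonneg hA hB]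

lemma aux_tri {n : ℕ} (a b : Fin n → ℝ) :
    Real.sqrt (∑ i, (a i + b i) ^ 2)
      ≤ Real.sqrt (∑ i, (a i) ^ 2) + Real.sqrt (∑ i, (b i) ^ 2) := by
  set A := Real.sqrt (∑ i, (a i) ^ 2) with hA
  set B := Real.sqrt (∑ i, (b i) ^ 2) with hB
  have hcs := Real.sum_mul_le_sqrt_mul_sqrt Finset.univ a b
  have hA2 : A ^ 2 = ∑ i, (a i) ^ 2 :=
    Real.sq_sqrt (Finset.sum_nonneg fun i _ => sq_nonneg _)
  have hB2 : B ^ 2 = ∑ i, (b i) ^ 2 :=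
    Real.sq_sqrt (Finset.sum_nonneg fun i _ => sq_nonneg _)
  have h1 : ∑ i, (a i + b i) ^ 2 ≤ (A + B) ^ 2 := by
    have : ∑ i, (a i + b i) ^ 2
        = ∑ i, (a i) ^ 2 + 2 * (∑ i, a i * b i) + ∑ i, (b i) ^ 2 := by
      rw [Finset.mul_sum, ← Finset.sum_add_distrib, ← Finset.sum_add_distrib]
      exact Finset.sum_congr rfl fun i _ => by ring
    rw [this]
    nlinarith [hcs]
  calc Real.sqrt (∑ i, (a i + b i) ^ 2) ≤ Real.sqrt ((A + B) ^ 2) := Real.sqrt_le_sqrt h1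
    _ = A + B := Real.sqrt_sq (by positivity)


/-- Compression-based ML denoising under AWGN. Let `x ∈ ℝⁿ`, `C` a codebook
with `|C| ≤ 2^R`, noise `N ~ N(0, σ²Iₙ)`, observation `y = x + N`, `x̂` the nearest codeword
to `y` and `x̃` the nearest codeword to `x`, with `D(P) = ‖x̃ − x‖²`. Then with probability
at least `1 − 2^{−ηR+2}`,
`√(D(P)) ≤ ‖x − x̂‖ ≤ √(D(P)) + 2σ√((2 ln 2)R)(1 + 2√η)`. -/
theorem stmt16 {Ω : Type*} [MeasurableSpace Ω] (P : Measure Ω) [IsProbabilityMeasure P]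
    {n : ℕ} (σ R η : ℝ) (hσ : 0 < σ) (hR : 0 < R) (hη : η ∈ Set.Ioo (0 : ℝ) 1)
    (C : Finset (Fin n → ℝ)) (hCne : C.Nonempty) (hcard : (C.card : ℝ) ≤ 2 ^ R)
    (x : Fin n → ℝ) (N : Ω → Fin n → ℝ) (hNmeas : Measurable N)
    (hN : Measure.map N P = Measure.pi fun _ : Fin n => gaussianReal 0 (σ ^ 2).toNNReal)
    (xhat : Ω → Fin n → ℝ) (hhatmem : ∀ ω, xhat ω ∈ C)
    (hhatmin : ∀ ω, ∀ c ∈ C,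
      ∑ i, (xhat ω i - (x i + N ω i)) ^ 2 ≤ ∑ i, (c i - (x i + N ω i)) ^ 2)
    (xtil : Fin n → ℝ) (htilmem : xtil ∈ C)
    (htilmin : ∀ c ∈ C, ∑ i, (xtil i - x i) ^ 2 ≤ ∑ i, (c i - x i) ^ 2) :
    ENNReal.ofReal (1 - (2 : ℝ) ^ (-η * R + 2)) ≤
      P {ω | Real.sqrt (∑ i, (xtil i - x i) ^ 2) ≤ Real.sqrt (∑ i, (x i - xhat ω i) ^ 2) ∧
             Real.sqrt (∑ i, (x i - xhat ω i) ^ 2) ≤ Real.sqrt (∑ i, (xtil i - x i) ^ 2)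
               + 2 * σ * Real.sqrt (2 * Real.log 2 * R) * (1 + 2 * Real.sqrt η)} := by
  obtain ⟨hη0, hη1⟩ := hη
  have hlog2 : 0 < Real.log 2 := Real.log_pos one_lt_two
  set v : ℝ≥0 := (σ ^ 2).toNNReal with hvdef
  have hvne : v ≠ 0 := by
    rw [hvdef, ne_eq, Real.toNNReal_eq_zero, not_le]
    positivity
  have hvcoe : (v : ℝ) = σ ^ 2 := Real.coe_toNNReal _ (by positivity)
  set μpi := Measure.pi fun _ : Fin n => gaussianReal 0 v with hμpi
  set t₁ : ℝ := σ * Real.sqrt (2 * Real.log 2 * R * (1 + η)) with ht₁def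
  have ht₁pos : 0 < t₁ :=
    mul_pos hσ (Real.sqrt_pos.2 (by positivity))
  set bad : (Fin n → ℝ) → Set (Fin n → ℝ) :=
    fun c => {z | t₁ * Real.sqrt (∑ i, (c i - xtil i) ^ 2) < ∑ i, (c i - xtil i) * z i}
    with hbaddef
  have hmeas_sum : ∀ c : Fin n → ℝ, Measurable fun z : Fin n → ℝ => ∑ i, (c i - xtil i) * z i :=
    fun c => Finset.measurable_sum _ fun i _ => (measurable_pi_apply i).const_mul _
  have hbadmeas : ∀ c, MeasurableSet (bad c) := fun c =>
    measurableSet_lt measurable_const (hmeas_sum c)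
  -- per-codeword Chernoff bound
  have hper : ∀ c ∈ C, μpi (bad c) ≤ ENNReal.ofReal (Real.exp (-(t₁ ^ 2) / (2 * σ ^ 2))) := by
    intro c hc
    by_cases hceq : c = xtil
    · have hempty : bad c = ∅ := by
        ext z
        simp [hbaddef, hceq]
      rw [hempty]
      simp
    · set S := ∑ i, (c i - xtil i) ^ 2 with hS
      have hSpos : 0 < S := by
        have hex : ∃ j, c j ≠ xtil j := by
          by_contra h
          push_neg at h
          exact hceq (funext h)
        obtain ⟨j, hj⟩ := hex
        exact Finset.sum_pos' (fun i _ => sq_nonneg _)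
          ⟨j, Finset.mem_univ j, pow_two_pos_of_ne_zero (sub_ne_zero.2 hj)⟩
      set Sr := Real.sqrt S with hSrdef
      have hSrpos : 0 < Sr := Real.sqrt_pos.2 hSpos
      have hSr2 : Sr ^ 2 = S := Real.sq_sqrt hSpos.le
      set s := t₁ / (σ ^ 2 * Sr) with hsdef
      have hs0 : 0 ≤ s := by positivity
      have h1 : μpi (bad c) ≤ μpi {z | t₁ * Sr ≤ ∑ i, (c i - xtil i) * z i} := by
        apply measure_mono
        intro z hz
        simp only [hbaddef, Set.mem_setOf_eq] at hz ⊢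
        exact hz.le
      have h2 := aux_chernoff v hvne (fun i => c i - xtil i) (t₁ * Sr) s hs0
      have hexp : -s * (t₁ * Sr) + (v : ℝ) * s ^ 2 * (∑ i, (c i - xtil i) ^ 2) / 2
          = -(t₁ ^ 2) / (2 * σ ^ 2) := by
        rw [hvcoe, ← hS, ← hSr2, hsdef]
        field_simp
        ring
      rw [hexp] at h2
      exact h1.trans h2
  -- the bad event in Ω and union bound
  set Bset : Set Ω := ⋃ c ∈ C, N ⁻¹' (bad c) with hBsetdef
  have hBmeas : MeasurableSet Bset :=
    MeasurableSet.biUnion C.countable_toSet fun c _ => hNmeas (hbadmeas c)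
  have hexpval : Real.exp (-(t₁ ^ 2) / (2 * σ ^ 2)) = (2 : ℝ) ^ (-(R * (1 + η))) := by
    have ht₁sq : t₁ ^ 2 = σ ^ 2 * (2 * Real.log 2 * R * (1 + η)) := by
      rw [ht₁def, mul_pow, Real.sq_sqrt (by positivity)]
    rw [Real.rpow_def_of_pos (by norm_num : (0:ℝ) < 2), ht₁sq]
    congr 1
    have hσ2 : σ ^ 2 ≠ 0 := by positivity
    field_simp
  have hPB : P Bset ≤ ENNReal.ofReal ((2 : ℝ) ^ (-η * R)) := by
    have step1 : P Bset ≤ ∑ c ∈ C, P (N ⁻¹' bad c) := measure_biUnion_finset_le _ _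
    have step2 : ∀ c ∈ C, P (N ⁻¹' bad c) = μpi (bad c) := by
      intro c _
      rw [← hN, Measure.map_apply hNmeas (hbadmeas c)]
    calc P Bset ≤ ∑ c ∈ C, P (N ⁻¹' bad c) := step1
      _ = ∑ c ∈ C, μpi (bad c) := Finset.sum_congr rfl step2
      _ ≤ ∑ _c ∈ C, ENNReal.ofReal (Real.exp (-(t₁ ^ 2) / (2 * σ ^ 2))) :=
          Finset.sum_le_sum hper
      _ = (C.card : ℝ≥0∞) * ENNReal.ofReal (Real.exp (-(t₁ ^ 2) / (2 * σ ^ 2))) := by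
          rw [Finset.sum_const, nsmul_eq_mul]
      _ = ENNReal.ofReal ((C.card : ℝ) * Real.exp (-(t₁ ^ 2) / (2 * σ ^ 2))) := by
          rw [ENNReal.ofReal_mul (by positivity), ENNReal.ofReal_natCast]
      _ ≤ ENNReal.ofReal ((2 : ℝ) ^ (-η * R)) := by
          apply ENNReal.ofReal_le_ofReal
          rw [hexpval]
          calc (C.card : ℝ) * (2 : ℝ) ^ (-(R * (1 + η)))
              ≤ (2 : ℝ) ^ R * (2 : ℝ) ^ (-(R * (1 + η))) := by
                apply mul_le_mul_of_nonneg_right hcard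
                positivity
            _ = (2 : ℝ) ^ (R + -(R * (1 + η))) :=
                (Real.rpow_add (by norm_num) _ _).symm
            _ = (2 : ℝ) ^ (-η * R) := by
                rw [show R + -(R * (1 + η)) = -η * R by ring]
  -- deterministic part: complement of Bset is contained in the good event
  have hsubset : Bsetᶜ ⊆
      {ω | Real.sqrt (∑ i, (xtil i - x i) ^ 2) ≤ Real.sqrt (∑ i, (x i - xhat ω i) ^ 2) ∧
           Real.sqrt (∑ i, (x i - xhat ω i) ^ 2) ≤ Real.sqrt (∑ i, (xtil i - x i) ^ 2)
             + 2 * σ * Real.sqrt (2 * Real.log 2 * R) * (1 + 2 * Real.sqrt η)} := by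
    intro ω hω
    simp only [hBsetdef, Set.mem_compl_iff, Set.mem_iUnion, not_exists, Set.mem_preimage,
      hbaddef, Set.mem_setOf_eq, not_lt] at hω
    set A := Real.sqrt (∑ i, (x i - xhat ω i) ^ 2) with hAdef
    set B := Real.sqrt (∑ i, (xtil i - x i) ^ 2) with hBdef
    have hA0 : 0 ≤ A := Real.sqrt_nonneg _
    have hB0 : 0 ≤ B := Real.sqrt_nonneg _
    have hA2 : A ^ 2 = ∑ i, (x i - xhat ω i) ^ 2 :=
      Real.sq_sqrt (Finset.sum_nonneg fun i _ => sq_nonneg _)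
    have hB2 : B ^ 2 = ∑ i, (xtil i - x i) ^ 2 :=
      Real.sq_sqrt (Finset.sum_nonneg fun i _ => sq_nonneg _)
    have hsum_flip : ∑ i, (xhat ω i - x i) ^ 2 = ∑ i, (x i - xhat ω i) ^ 2 :=
      Finset.sum_congr rfl fun i _ => by ring
    constructor
    · -- lower bound
      apply Real.sqrt_le_sqrt
      rw [← hsum_flip]
      exact htilmin (xhat ω) (hhatmem ω)
    · -- upper bound
      set T := Real.sqrt (∑ i, (xhat ω i - xtil i) ^ 2) with hTdef
      have hT0 : 0 ≤ T := Real.sqrt_nonneg _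
      have hinner : ∑ i, (xhat ω i - xtil i) * N ω i ≤ t₁ * T :=
        hω (xhat ω) (hhatmem ω)
      -- expansion of squared distances
      have expand : ∀ c : Fin n → ℝ, ∑ i, (c i - (x i + N ω i)) ^ 2
          = ∑ i, (c i - x i) ^ 2 - 2 * (∑ i, (c i - x i) * N ω i) + ∑ i, (N ω i) ^ 2 := by
        intro c
        rw [Finset.mul_sum, ← Finset.sum_sub_distrib, ← Finset.sum_add_distrib]
        exact Finset.sum_congr rfl fun i _ => by ring
      have hinner_split : ∑ i, (xhat ω i - xtil i) * N ω i
          = ∑ i, (xhat ω i - x i) * N ω i - ∑ i, (xtil i - x i) * N ω i := by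
        rw [← Finset.sum_sub_distrib]
        exact Finset.sum_congr rfl fun i _ => by ring
      have hkey : ∑ i, (xhat ω i - x i) ^ 2
          ≤ ∑ i, (xtil i - x i) ^ 2 + 2 * ∑ i, (xhat ω i - xtil i) * N ω i := by
        have h := hhatmin ω xtil htilmem
        rw [expand (xhat ω), expand xtil] at h
        rw [hinner_split]
        linarith
      -- triangle inequality : T ≤ A + B
      have htri : T ≤ A + B := by
        have e1 : ∑ i, (xhat ω i - xtil i) ^ 2
            = ∑ i, ((xhat ω i - x i) + (x i - xtil i)) ^ 2 :=
          Finset.sum_congr rfl fun i _ => by ring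
        have e3 : ∑ i, (x i - xtil i) ^ 2 = ∑ i, (xtil i - x i) ^ 2 :=
          Finset.sum_congr rfl fun i _ => by ring
        calc T = Real.sqrt (∑ i, ((xhat ω i - x i) + (x i - xtil i)) ^ 2) := by rw [hTdef, e1]
          _ ≤ Real.sqrt (∑ i, (xhat ω i - x i) ^ 2) + Real.sqrt (∑ i, (x i - xtil i) ^ 2) :=
              aux_tri _ _
          _ = A + B := by rw [hsum_flip, e3]
      -- quadratic inequality
      have hquad : A ≤ B + 2 * t₁ := by
        apply aux_quad A B t₁ hA0 hB0 ht₁pos.le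
        have h5 : ∑ i, (xhat ω i - xtil i) * N ω i ≤ t₁ * (A + B) :=
          hinner.trans (mul_le_mul_of_nonneg_left htri ht₁pos.le)
        calc A ^ 2 = ∑ i, (xhat ω i - x i) ^ 2 := by rw [hA2, hsum_flip]
          _ ≤ ∑ i, (xtil i - x i) ^ 2 + 2 * ∑ i, (xhat ω i - xtil i) * N ω i := hkey
          _ ≤ B ^ 2 + 2 * t₁ * (A + B) := by rw [hB2]; linarith [h5]
      -- bound 2 t₁ by the stated constant
      have hsqrt1η : Real.sqrt (1 + η) ≤ 1 + 2 * Real.sqrt η := by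
        rw [show (1 + 2 * Real.sqrt η) = Real.sqrt ((1 + 2 * Real.sqrt η) ^ 2) from
          (Real.sqrt_sq (by positivity)).symm]
        apply Real.sqrt_le_sqrt
        nlinarith [Real.sq_sqrt hη0.le, Real.sqrt_nonneg η]
      have ht₁le : t₁ ≤ σ * Real.sqrt (2 * Real.log 2 * R) * (1 + 2 * Real.sqrt η) := by
        rw [ht₁def, Real.sqrt_mul (by positivity) (1 + η), ← mul_assoc]
        apply mul_le_mul_of_nonneg_left hsqrt1η
        positivity
      calc A ≤ B + 2 * t₁ := hquad
        _ ≤ B + 2 * σ * Real.sqrt (2 * Real.log 2 * R) * (1 + 2 * Real.sqrt η) := by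
            linarith [ht₁le]
  -- putting it together
  have ha'pos : (0:ℝ) < (2 : ℝ) ^ (-η * R) := Real.rpow_pos_of_pos (by norm_num) _
  have ha'le1 : (2 : ℝ) ^ (-η * R) ≤ 1 :=
    Real.rpow_le_one_of_one_le_of_nonpos (by norm_num) (by nlinarith)
  have haa : (2 : ℝ) ^ (-η * R) ≤ (2 : ℝ) ^ (-η * R + 2) :=
    Real.rpow_le_rpow_of_exponent_le (by norm_num) (by linarith)
  have hcompl : P Bsetᶜ = 1 - P Bset := prob_compl_eq_one_sub hBmeas
  have hfinal : ENNReal.ofReal (1 - (2 : ℝ) ^ (-η * R + 2)) ≤ P Bsetᶜ := by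
    rw [hcompl]
    apply ENNReal.le_sub_of_add_le_right (measure_ne_top P Bset)
    calc ENNReal.ofReal (1 - (2 : ℝ) ^ (-η * R + 2)) + P Bset
        ≤ ENNReal.ofReal (1 - (2 : ℝ) ^ (-η * R)) + ENNReal.ofReal ((2 : ℝ) ^ (-η * R)) :=
          add_le_add (ENNReal.ofReal_le_ofReal (by linarith)) hPB
      _ = ENNReal.ofReal 1 := by
          rw [← ENNReal.ofReal_add (by linarith) ha'pos.le]
          norm_num
      _ = 1 := ENNReal.ofReal_one
  exact hfinal.trans (measure_mono hsubset)
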